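/- Let φ: ℝ⁴ → ℂ be a nonvanishing C² function satisfying the Klein-Gordon equation (iħ∂_ν + eA_ν)(iħ∂^ν + eA^ν)φ = m₀²c²φ for a C¹ vector field A, and let 𝒱^μ(x) := iλ² ∂^μ ln φ(x) + (e/m₀)A^μ(x) with λ² = ħ/m₀. Then 𝒱*_μ(x)𝒱^μ(x) = c² + (ħ²/(2m₀²)) · ∂_μ∂^μ(φ*(x)φ(x)) / (φ*(x)φ(x)) for all x with φ(x) ≠ 0. -/

import Mathlib

open Complex

noncomputable section

/-- Spacetime `ℝ⁴`. -/
abbrev Spt := Fin 4 → ℝ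

/-- Components of the Minkowski metric `diag(+1,-1,-1,-1)`. -/
def η (μ : Fin 4) : ℝ := if μ = 0 then 1 else -1

def pdC (μ : Fin 4) (f : Spt → ℂ) (x : Spt) : ℂ := fderiv ℝ f x (Pi.single μ 1)

/-- `iħ∂_μ f + e A_μ f` (with `A μ` the lowered components `A_μ`). -/
def Pop (hbar e : ℝ) (A : Fin 4 → Spt → ℝ) (μ : Fin 4) (f : Spt → ℂ) (x : Spt) : ℂ :=
  I * (hbar : ℂ) * pdC μ f x + (e : ℂ) * (A μ x) * f x

/-- The Klein-Gordon operator `(iħ∂_ν + eA_ν)(iħ∂^ν + eA^ν)φ`. -/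
def KGop (hbar e : ℝ) (A : Fin 4 → Spt → ℝ) (φ : Spt → ℂ) (x : Spt) : ℂ :=
  ∑ ν : Fin 4, (η ν : ℂ) * Pop hbar e A ν (fun y => Pop hbar e A ν φ y) x

/-- The d'Alembertian `∂_μ∂^μ f`. -/
def boxC (f : Spt → ℂ) (x : Spt) : ℂ :=
  ∑ μ : Fin 4, (η μ : ℂ) * pdC μ (fun y => pdC μ f y) x

/-- The lowered complex velocity `𝒱_μ = iλ²∂_μ ln φ + (e/m₀)A_μ`. -/
def cVelLow (lam m₀ e : ℝ) (A : Fin 4 → Spt → ℝ) (φ : Spt → ℂ) (μ : Fin 4) (x : Spt) : ℂ :=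
  I * (lam : ℂ) ^ 2 * pdC μ φ x / φ x + ((e / m₀ : ℝ) : ℂ) * (A μ x)

lemma pdC_add {f g : Spt → ℂ} {x : Spt} (hf : DifferentiableAt ℝ f x)
    (hg : DifferentiableAt ℝ g x) (μ : Fin 4) :
    pdC μ (fun y => f y + g y) x = pdC μ f x + pdC μ g x := by
  simp [pdC, fderiv_fun_add hf hg]

lemma pdC_const_mul {f : Spt → ℂ} {x : Spt} (hf : DifferentiableAt ℝ f x) (c : ℂ) (μ : Fin 4) :
    pdC μ (fun y => c * f y) x = c * pdC μ f x := by
  simp [pdC, fderiv_const_mul hf c]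

lemma pdC_mul {f g : Spt → ℂ} {x : Spt} (hf : DifferentiableAt ℝ f x)
    (hg : DifferentiableAt ℝ g x) (μ : Fin 4) :
    pdC μ (fun y => f y * g y) x = pdC μ f x * g x + f x * pdC μ g x := by
  simp [pdC, fderiv_fun_mul hf hg]; ring

lemma pdC_conj {f : Spt → ℂ} {x : Spt} (hf : DifferentiableAt ℝ f x) (μ : Fin 4) :
    pdC μ (fun y => (starRingEnd ℂ) (f y)) x = (starRingEnd ℂ) (pdC μ f x) := by
  have h : HasFDerivAt (fun y => (starRingEnd ℂ) (f y))
      ((Complex.conjCLE : ℂ →L[ℝ] ℂ).comp (fderiv ℝ f x)) x :=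
    ((Complex.conjCLE : ℂ →L[ℝ] ℂ).hasFDerivAt).comp x hf.hasFDerivAt
  rw [pdC, h.fderiv]
  simp [pdC]

lemma pdC_ofReal {g : Spt → ℝ} {x : Spt} (hg : DifferentiableAt ℝ g x) (μ : Fin 4) :
    pdC μ (fun y => ((g y : ℝ) : ℂ)) x = ((fderiv ℝ g x (Pi.single μ 1) : ℝ) : ℂ) := by
  have h : HasFDerivAt (fun y => ((g y : ℝ) : ℂ))
      (Complex.ofRealCLM.comp (fderiv ℝ g x)) x :=
    (Complex.ofRealCLM.hasFDerivAt).comp x hg.hasFDerivAt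
  rw [pdC, h.fderiv]
  simp [pdC]

lemma diff_conj {f : Spt → ℂ} (hf : Differentiable ℝ f) :
    Differentiable ℝ (fun y => (starRingEnd ℂ) (f y)) :=
  (Complex.conjCLE : ℂ →L[ℝ] ℂ).differentiable.comp hf

lemma diff_pdC {f : Spt → ℂ} (hf : ContDiff ℝ 2 f) (μ : Fin 4) :
    Differentiable ℝ (fun y => pdC μ f y) := by
  have h : ContDiff ℝ 1 (fderiv ℝ f) := hf.fderiv_right (by norm_num)
  exact ((ContinuousLinearMap.apply ℝ ℂ (Pi.single μ 1)).differentiable.comp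
    (h.differentiable one_ne_zero))

lemma keyalg (h e m p cp q cq a da f cf ηv : ℂ)
    (hf : f ≠ 0) (hcf : cf ≠ 0) (hm : m ≠ 0) :
    ηv * (-(I*(h/m)*cp/cf) + e/m*a) * (I*(h/m)*p/f + e/m*a)
      = 1/(2*m^2) * ((ηv * (-h^2*q + I*h*e*da*f + 2*I*h*e*a*p + e^2*a^2*f))/f)
        + 1/(2*m^2) * ((ηv * (-h^2*cq - I*h*e*da*cf - 2*I*h*e*a*cp + e^2*a^2*cf))/cf)
        + h^2/(2*m^2) * (ηv * (cq*f + 2*cp*p + cf*q)) / (cf*f) := by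
  have hm2 : (2*m^2 : ℂ) ≠ 0 := mul_ne_zero two_ne_zero (pow_ne_zero 2 hm)
  have hd1 : (2*m^2)*f ≠ 0 := mul_ne_zero hm2 hf
  have hd2 : (2*m^2)*cf ≠ 0 := mul_ne_zero hm2 hcf
  have hd3 : (2*m^2)*(cf*f) ≠ 0 := mul_ne_zero hm2 (mul_ne_zero hcf hf)
  have hmcf : m*cf ≠ 0 := mul_ne_zero hm hcf
  have hmf : m*f ≠ 0 := mul_ne_zero hm hf
  have e1 : -(I*(h/m)*cp/cf) + e/m*a = (-(I*h*cp))/(m*cf) + (e*a)/m := by ring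
  have e2 : I*(h/m)*p/f + e/m*a = (I*h*p)/(m*f) + (e*a)/m := by ring
  rw [e1, e2, div_add_div _ _ hmcf hm, div_add_div _ _ hmf hm]
  rw [show (1:ℂ)/(2*m^2) * ((ηv * (-h^2*q + I*h*e*da*f + 2*I*h*e*a*p + e^2*a^2*f))/f)
      = (ηv * (-h^2*q + I*h*e*da*f + 2*I*h*e*a*p + e^2*a^2*f))/((2*m^2)*f) from by ring]
  rw [show (1:ℂ)/(2*m^2) * ((ηv * (-h^2*cq - I*h*e*da*cf - 2*I*h*e*a*cp + e^2*a^2*cf))/cf)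
      = (ηv * (-h^2*cq - I*h*e*da*cf - 2*I*h*e*a*cp + e^2*a^2*cf))/((2*m^2)*cf) from by ring]
  rw [show h^2/(2*m^2) * (ηv * (cq*f + 2*cp*p + cf*q)) / (cf*f)
      = (h^2 * (ηv * (cq*f + 2*cp*p + cf*q)))/((2*m^2)*(cf*f)) from by ring]
  rw [div_add_div _ _ hd1 hd2, div_add_div _ _ (mul_ne_zero hd1 hd2) hd3]
  rw [show ηv * ((-(I*h*cp) * m + m*cf*(e*a))/(m*cf*m)) * ((I*h*p * m + m*f*(e*a))/(m*f*m))
      = (ηv * (-(I*h*cp) * m + m*cf*(e*a)) * (I*h*p * m + m*f*(e*a)))/((m*cf*m)*(m*f*m)) from by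
        ring]
  rw [div_eq_div_iff (mul_ne_zero (mul_ne_zero hmcf hm) (mul_ne_zero hmf hm))
    (mul_ne_zero (mul_ne_zero hd1 hd2) hd3)]
  ring_nf
  simp only [Complex.I_sq]
  ring

set_option maxHeartbeats 2000000 in
/-- **For a Klein-Gordon wave function,
`𝒱*_μ𝒱^μ = c² + (ħ²/2m₀²)·∂_μ∂^μ(φ*φ)/(φ*φ)`.** -/
theorem complex_velocity_square_KG
    (hbar m₀ e c lam : ℝ) (hhb : 0 < hbar) (hm : 0 < m₀) (he : 0 < e) (hc : 0 < c)
    (hlam : lam ^ 2 = hbar / m₀)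
    (φ : Spt → ℂ) (hφ : ContDiff ℝ 2 φ) (hφ0 : ∀ x, φ x ≠ 0)
    (A : Fin 4 → Spt → ℝ) (hA : ∀ μ, ContDiff ℝ 1 (A μ))
    (hKG : ∀ x, KGop hbar e A φ x = (m₀ : ℂ) ^ 2 * (c : ℂ) ^ 2 * φ x) :
    ∀ x : Spt, φ x ≠ 0 →
      (∑ μ : Fin 4, (η μ : ℂ) * (starRingEnd ℂ) (cVelLow lam m₀ e A φ μ x) *
          cVelLow lam m₀ e A φ μ x)
      = (c : ℂ) ^ 2 + ((hbar : ℂ) ^ 2 / (2 * (m₀ : ℂ) ^ 2)) *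
          boxC (fun y => (starRingEnd ℂ) (φ y) * φ y) x /
          ((starRingEnd ℂ) (φ x) * φ x) := by
  intro x hx
  have hφd : Differentiable ℝ φ := hφ.differentiable (by norm_num)
  have hpd : ∀ μ : Fin 4, Differentiable ℝ (fun y => pdC μ φ y) := fun μ => diff_pdC hφ μ
  have hAd : ∀ ν : Fin 4, Differentiable ℝ (fun y => ((A ν y : ℝ) : ℂ)) := fun ν =>
    Complex.ofRealCLM.differentiable.comp ((hA ν).differentiable one_ne_zero)
  have hcx : (starRingEnd ℂ) (φ x) ≠ 0 := by
    intro h; exact hx (by simpa using h)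
  have hm0 : (m₀ : ℂ) ≠ 0 := by exact_mod_cast hm.ne'
  have hlamC : (lam : ℂ) ^ 2 = (hbar : ℂ) / (m₀ : ℂ) := by
    rw [← Complex.ofReal_pow, hlam, Complex.ofReal_div]
  set E : Fin 4 → ℂ := fun ν =>
    -(hbar:ℂ)^2 * pdC ν (fun y => pdC ν φ y) x
      + I*(hbar:ℂ)*(e:ℂ)*((fderiv ℝ (A ν) x (Pi.single ν 1) : ℝ):ℂ) * φ x
      + 2*I*(hbar:ℂ)*(e:ℂ)*((A ν x : ℝ):ℂ)*pdC ν φ x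
      + (e:ℂ)^2*((A ν x : ℝ):ℂ)^2*φ x with hEdef
  set Ec : Fin 4 → ℂ := fun ν =>
    -(hbar:ℂ)^2 * (starRingEnd ℂ) (pdC ν (fun y => pdC ν φ y) x)
      - I*(hbar:ℂ)*(e:ℂ)*((fderiv ℝ (A ν) x (Pi.single ν 1) : ℝ):ℂ) * (starRingEnd ℂ) (φ x)
      - 2*I*(hbar:ℂ)*(e:ℂ)*((A ν x : ℝ):ℂ)*(starRingEnd ℂ) (pdC ν φ x)
      + (e:ℂ)^2*((A ν x : ℝ):ℂ)^2*(starRingEnd ℂ) (φ x) with hEcdef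
  set B : Fin 4 → ℂ := fun μ =>
    (starRingEnd ℂ) (pdC μ (fun y => pdC μ φ y) x) * φ x
      + 2 * (starRingEnd ℂ) (pdC μ φ x) * pdC μ φ x
      + (starRingEnd ℂ) (φ x) * pdC μ (fun y => pdC μ φ y) x with hBdef
  -- expansion of the KG operator
  have hE : ∀ ν : Fin 4, Pop hbar e A ν (fun y => Pop hbar e A ν φ y) x = E ν := by
    intro ν
    have h1 : (fun y => Pop hbar e A ν φ y)
        = fun y => (I*(hbar:ℂ)) * pdC ν φ y + (e:ℂ) * (((A ν y : ℝ):ℂ) * φ y) := by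
      funext y; simp only [Pop]; ring
    have hd1 : DifferentiableAt ℝ (fun y => (I*(hbar:ℂ)) * pdC ν φ y) x :=
      ((hpd ν).const_mul _) x
    have hd2 : DifferentiableAt ℝ (fun y => (e:ℂ) * (((A ν y : ℝ):ℂ) * φ y)) x :=
      (((hAd ν).mul hφd).const_mul _) x
    have hpder : pdC ν (fun y => Pop hbar e A ν φ y) x
        = I*(hbar:ℂ)*pdC ν (fun y => pdC ν φ y) x
          + (e:ℂ)*(((fderiv ℝ (A ν) x (Pi.single ν 1) : ℝ):ℂ) * φ x
            + ((A ν x : ℝ):ℂ) * pdC ν φ x) := by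
      rw [h1, pdC_add hd1 hd2, pdC_const_mul ((hpd ν) x), pdC_const_mul (((hAd ν).fun_mul hφd) x),
          pdC_mul ((hAd ν) x) (hφd x), pdC_ofReal (((hA ν).differentiable one_ne_zero) x)]
    have h2 : Pop hbar e A ν (fun y => Pop hbar e A ν φ y) x
        = I*(hbar:ℂ)*pdC ν (fun y => Pop hbar e A ν φ y) x
          + (e:ℂ)*((A ν x : ℝ):ℂ)*(I*(hbar:ℂ)*pdC ν φ x + (e:ℂ)*((A ν x : ℝ):ℂ)*φ x) := rfl
    rw [h2, hpder, hEdef]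
    linear_combination ((hbar:ℂ)^2 * pdC ν (fun y => pdC ν φ y) x) * Complex.I_sq
  have hS : ∑ ν : Fin 4, (η ν : ℂ) * E ν = (m₀:ℂ)^2*(c:ℂ)^2*φ x := by
    rw [← hKG x]; unfold KGop
    exact Finset.sum_congr rfl (fun ν _ => by rw [hE ν])
  have hSc : ∑ ν : Fin 4, (η ν : ℂ) * Ec ν = (m₀:ℂ)^2*(c:ℂ)^2*(starRingEnd ℂ) (φ x) := by
    calc ∑ ν : Fin 4, (η ν : ℂ) * Ec ν
        = ∑ ν : Fin 4, (starRingEnd ℂ) ((η ν : ℂ) * E ν) := by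
          refine Finset.sum_congr rfl (fun ν _ => ?_)
          simp only [hEdef, hEcdef, map_add, map_sub, map_neg, map_mul, map_pow, map_ofNat,
            conj_I, conj_ofReal]
          ring
      _ = (starRingEnd ℂ) (∑ ν : Fin 4, (η ν : ℂ) * E ν) := (map_sum _ _ _).symm
      _ = (starRingEnd ℂ) ((m₀:ℂ)^2*(c:ℂ)^2*φ x) := by rw [hS]
      _ = (m₀:ℂ)^2*(c:ℂ)^2*(starRingEnd ℂ) (φ x) := by
          simp [map_mul, map_pow, conj_ofReal]
  -- expansion of the box of φ*φ
  have hB : ∀ μ : Fin 4,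
      pdC μ (fun y => pdC μ (fun z => (starRingEnd ℂ) (φ z) * φ z) y) x = B μ := by
    intro μ
    have h1 : (fun y => pdC μ (fun z => (starRingEnd ℂ) (φ z) * φ z) y)
        = fun y => (starRingEnd ℂ) (pdC μ φ y) * φ y + (starRingEnd ℂ) (φ y) * pdC μ φ y := by
      funext y
      rw [pdC_mul ((diff_conj hφd) y) (hφd y), pdC_conj (hφd y)]
    rw [h1, pdC_add (((diff_conj (hpd μ)).fun_mul hφd) x) (((diff_conj hφd).fun_mul (hpd μ)) x),
        pdC_mul ((diff_conj (hpd μ)) x) (hφd x), pdC_mul ((diff_conj hφd) x) ((hpd μ) x),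
        pdC_conj ((hpd μ) x), pdC_conj (hφd x), hBdef]
    ring
  have hBox : boxC (fun y => (starRingEnd ℂ) (φ y) * φ y) x
      = ∑ μ : Fin 4, (η μ : ℂ) * B μ := by
    unfold boxC
    exact Finset.sum_congr rfl (fun μ _ => by rw [hB μ])
  -- conjugate of the complex velocity
  have hcV : ∀ μ : Fin 4, (starRingEnd ℂ) (cVelLow lam m₀ e A φ μ x)
      = -(I*(lam:ℂ)^2*(starRingEnd ℂ) (pdC μ φ x)/(starRingEnd ℂ) (φ x))
        + ((e / m₀ : ℝ):ℂ)*((A μ x : ℝ):ℂ) := by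
    intro μ
    simp only [cVelLow, map_add, map_mul, map_div₀, map_pow, conj_I, conj_ofReal]
    ring
  -- per-term key identity
  have key : ∀ μ : Fin 4, (η μ : ℂ) * (starRingEnd ℂ) (cVelLow lam m₀ e A φ μ x) *
      cVelLow lam m₀ e A φ μ x
      = (1/(2*(m₀:ℂ)^2)) * (((η μ : ℂ) * E μ) / φ x)
        + (1/(2*(m₀:ℂ)^2)) * (((η μ : ℂ) * Ec μ) / (starRingEnd ℂ) (φ x))
        + ((hbar:ℂ)^2/(2*(m₀:ℂ)^2)) * ((η μ : ℂ) * B μ) / ((starRingEnd ℂ) (φ x) * φ x) := by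
    intro μ
    rw [hcV μ]
    simp only [cVelLow, hEdef, hEcdef, hBdef]
    rw [hlamC, Complex.ofReal_div]
    exact keyalg (hbar:ℂ) (e:ℂ) (m₀:ℂ) (pdC μ φ x) ((starRingEnd ℂ) (pdC μ φ x))
      (pdC μ (fun y => pdC μ φ y) x) ((starRingEnd ℂ) (pdC μ (fun y => pdC μ φ y) x))
      ((A μ x : ℝ):ℂ) ((fderiv ℝ (A μ) x (Pi.single μ 1) : ℝ):ℂ) (φ x)
      ((starRingEnd ℂ) (φ x)) ((η μ : ℝ):ℂ) hx hcx hm0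
  -- assemble
  calc (∑ μ : Fin 4, (η μ : ℂ) * (starRingEnd ℂ) (cVelLow lam m₀ e A φ μ x) *
          cVelLow lam m₀ e A φ μ x)
      = ∑ μ : Fin 4, ((1/(2*(m₀:ℂ)^2)) * (((η μ : ℂ) * E μ) / φ x)
        + (1/(2*(m₀:ℂ)^2)) * (((η μ : ℂ) * Ec μ) / (starRingEnd ℂ) (φ x))
        + ((hbar:ℂ)^2/(2*(m₀:ℂ)^2)) * ((η μ : ℂ) * B μ) / ((starRingEnd ℂ) (φ x) * φ x)) :=
        Finset.sum_congr rfl (fun μ _ => key μ)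
    _ = (1/(2*(m₀:ℂ)^2)) * ((∑ ν : Fin 4, (η ν : ℂ) * E ν) / φ x)
        + (1/(2*(m₀:ℂ)^2)) * ((∑ ν : Fin 4, (η ν : ℂ) * Ec ν) / (starRingEnd ℂ) (φ x))
        + ((hbar:ℂ)^2/(2*(m₀:ℂ)^2)) * (∑ μ : Fin 4, (η μ : ℂ) * B μ) /
            ((starRingEnd ℂ) (φ x) * φ x) := by
        rw [Finset.sum_add_distrib, Finset.sum_add_distrib, ← Finset.sum_div, ← Finset.mul_sum,
          ← Finset.sum_div, ← Finset.mul_sum, ← Finset.sum_div, ← Finset.mul_sum]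
    _ = (c : ℂ) ^ 2 + ((hbar : ℂ) ^ 2 / (2 * (m₀ : ℂ) ^ 2)) *
          boxC (fun y => (starRingEnd ℂ) (φ y) * φ y) x /
          ((starRingEnd ℂ) (φ x) * φ x) := by
        rw [hS, hSc, hBox]
        have h1 : (m₀:ℂ)^2*(c:ℂ)^2*φ x / φ x = (m₀:ℂ)^2*(c:ℂ)^2 := by
          rw [mul_div_assoc, div_self hx, mul_one]
        have h2 : (m₀:ℂ)^2*(c:ℂ)^2*(starRingEnd ℂ) (φ x) / (starRingEnd ℂ) (φ x)
            = (m₀:ℂ)^2*(c:ℂ)^2 := by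
          rw [mul_div_assoc, div_self hcx, mul_one]
        have h3 : (1/(2*(m₀:ℂ)^2)) * ((m₀:ℂ)^2*(c:ℂ)^2)
            + (1/(2*(m₀:ℂ)^2)) * ((m₀:ℂ)^2*(c:ℂ)^2) = (c:ℂ)^2 := by
          field_simp
          ring
        rw [h1, h2, h3]
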